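/- Let H_n be the n-dimensional hypercube graph (vertex set {0,1}^n, with two vertices adjacent iff their Hamming distance is 1), for n ≥ 1. Then Ric(H_n) = 2: for every f:{0,1}^n→ℝ and every vertex x, Γ₂(f)(x) ≥ 2·Γ(f)(x), and 2 is the largest constant with this property. -/

import Mathlib

noncomputable section
open Matrix

/-- The graph Laplacian: `Δ f (x) = Σ_{y ~ x} (f y - f x)`. -/
def lap {V : Type*} (G : SimpleGraph V) (f : V → ℝ) (x : V) : ℝ :=
  ∑ᶠ y ∈ {y | G.Adj x y}, (f y - f x)

/-- The carré du champ `Γ(f,g)(x) = (1/2) Σ_{y ~ x} (f x - f y)(g x - g y)`. -/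
def gam {V : Type*} (G : SimpleGraph V) (f g : V → ℝ) (x : V) : ℝ :=
  (1/2) * ∑ᶠ y ∈ {y | G.Adj x y}, (f x - f y) * (g x - g y)

/-- The iterated carré du champ `Γ₂(f) = (1/2) Δ Γ(f) - Γ(f, Δ f)`. -/
def gam2 {V : Type*} (G : SimpleGraph V) (f : V → ℝ) (x : V) : ℝ :=
  (1/2) * lap G (gam G f f) x - gam G f (lap G f) x

/-- `Ric(G) ≥ K` : the Bochner inequality `Γ₂(f)(x) ≥ K Γ(f)(x)` holds for all `f, x`. -/
def RicGE {V : Type*} (G : SimpleGraph V) (K : ℝ) : Prop :=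
  ∀ (f : V → ℝ) (x : V), K * gam G f f x ≤ gam2 G f x

/-- The `n`-dimensional hypercube: vertices `{0,1}ⁿ`, adjacent iff Hamming distance 1. -/
def cubeGraph (n : ℕ) : SimpleGraph (Fin n → Bool) where
  Adj x y := (Finset.univ.filter fun i => x i ≠ y i).card = 1
  symm := by
    constructor
    intro x y h
    have : (Finset.univ.filter fun i => y i ≠ x i) = (Finset.univ.filter fun i => x i ≠ y i) := by
      apply Finset.filter_congr
      intro i _
      exact ⟨Ne.symm, Ne.symm⟩
    rw [this]
    exact h
  loopless := by constructor; intro x h; simp at h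

def flp {n : ℕ} (i : Fin n) (x : Fin n → Bool) : Fin n → Bool :=
  Function.update x i (!x i)

lemma flp_apply {n : ℕ} (i j : Fin n) (x : Fin n → Bool) :
    flp i x j = if j = i then !x i else x j := Function.update_apply x i (!x i) j

lemma flp_self {n : ℕ} (i : Fin n) (x : Fin n → Bool) : flp i x i = !x i := by
  simp [flp_apply]

lemma flp_ne {n : ℕ} {i j : Fin n} (h : j ≠ i) (x : Fin n → Bool) : flp i x j = x j := by
  simp [flp_apply, h]

lemma flp_flp {n : ℕ} (i : Fin n) (x : Fin n → Bool) : flp i (flp i x) = x := by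
  funext j
  by_cases h : j = i
  · subst h; simp [flp_apply]
  · simp [flp_apply, h]

lemma flp_comm {n : ℕ} (i j : Fin n) (x : Fin n → Bool) :
    flp j (flp i x) = flp i (flp j x) := by
  by_cases hij : i = j
  · subst hij; rfl
  funext k
  by_cases h1 : k = i
  · subst h1; rw [flp_ne hij, flp_self, flp_self, flp_ne hij]
  by_cases h2 : k = j
  · subst h2; rw [flp_self, flp_ne (Ne.symm hij), flp_ne (Ne.symm hij), flp_self]
  · rw [flp_ne h2, flp_ne h1, flp_ne h1, flp_ne h2]

lemma flp_inj {n : ℕ} (x : Fin n → Bool) : Function.Injective (fun i => flp i x) := by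
  intro i j h
  by_contra hij
  have := congrFun h i
  simp only [] at this
  rw [flp_self, flp_ne hij] at this
  exact Bool.not_ne_self _ this

lemma adj_iff {n : ℕ} {x y : Fin n → Bool} :
    (cubeGraph n).Adj x y ↔ ∃ i, y = flp i x := by
  constructor
  · intro h
    obtain ⟨a, ha⟩ := Finset.card_eq_one.mp h
    refine ⟨a, funext fun j => ?_⟩
    by_cases hj : j = a
    · subst hj
      have hmem : j ∈ Finset.univ.filter fun i => x i ≠ y i := ha ▸ Finset.mem_singleton_self j
      have : x j ≠ y j := (Finset.mem_filter.mp hmem).2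
      rw [flp_self]
      revert this; cases x j <;> cases y j <;> simp
    · have hmem : j ∉ Finset.univ.filter fun i => x i ≠ y i := by
        rw [ha]; simpa using hj
      have : x j = y j := by
        by_contra hxy
        exact hmem (Finset.mem_filter.mpr ⟨Finset.mem_univ j, hxy⟩)
      rw [flp_ne hj, this]
  · rintro ⟨i, rfl⟩
    show (Finset.univ.filter fun j => x j ≠ flp i x j).card = 1
    have : (Finset.univ.filter fun j => x j ≠ flp i x j) = {i} := by
      ext j
      simp only [Finset.mem_filter, Finset.mem_univ, true_and, Finset.mem_singleton]
      by_cases h : j = i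
      · subst h; rw [flp_self]; simp
      · rw [flp_ne h]; simp [h]
    rw [this, Finset.card_singleton]

lemma nbr_set {n : ℕ} (x : Fin n → Bool) :
    {y | (cubeGraph n).Adj x y} = ↑(Finset.univ.image fun i => flp i x) := by
  ext y
  simp [adj_iff, eq_comm]

lemma lap_eq' {n : ℕ} (f : (Fin n → Bool) → ℝ) (x : Fin n → Bool) :
    lap (cubeGraph n) f x = ∑ i, (f (flp i x) - f x) := by
  rw [lap, nbr_set, finsum_mem_coe_finset,
    Finset.sum_image (fun i _ j _ h => flp_inj x h)]

lemma gam_eq' {n : ℕ} (f g : (Fin n → Bool) → ℝ) (x : Fin n → Bool) :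
    gam (cubeGraph n) f g x = (1/2) * ∑ i, (f x - f (flp i x)) * (g x - g (flp i x)) := by
  rw [gam, nbr_set, finsum_mem_coe_finset,
    Finset.sum_image (fun i _ j _ h => flp_inj x h)]

lemma expand_aux {n : ℕ} (b : ℝ) (p q r s : Fin n → ℝ) :
    (1/2)*((1/2)*∑ j, p j - (1/2)*∑ j, q j) - (1/2)*(b*(∑ j, r j - ∑ j, s j))
    = ∑ j, ((1/4)*p j - (1/4)*q j - (1/2)*(b*r j) + (1/2)*(b*s j)) := by
  simp only [Finset.sum_add_distrib, Finset.sum_sub_distrib, ← Finset.mul_sum]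
  ring

lemma sym_trick {n : ℕ} (L R : Fin n → Fin n → ℝ)
    (h : ∀ i j, L i j + L j i = R i j + R j i) :
    ∑ i, ∑ j, L i j = ∑ i, ∑ j, R i j := by
  have h1 : ∑ i, ∑ j, L j i = ∑ i, ∑ j, L i j := Finset.sum_comm
  have h2 : ∑ i, ∑ j, R j i = ∑ i, ∑ j, R i j := Finset.sum_comm
  have h3 : ∑ i, ∑ j, (L i j + L j i) = ∑ i, ∑ j, (R i j + R j i) :=
    Finset.sum_congr rfl fun i _ => Finset.sum_congr rfl fun j _ => h i j
  simp only [Finset.sum_add_distrib] at h3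
  rw [h1, h2] at h3
  linarith

lemma key_pt (ai aj mij c : ℝ) :
    ((1/4)*((ai - mij)*(ai - mij)) - (1/4)*((c - aj)*(c - aj)) - (1/2)*((c - ai)*(aj - c)) + (1/2)*((c - ai)*(mij - ai)))
    + ((1/4)*((aj - mij)*(aj - mij)) - (1/4)*((c - ai)*(c - ai)) - (1/2)*((c - aj)*(ai - c)) + (1/2)*((c - aj)*(mij - aj)))
    = (1/4)*(mij - ai - aj + c)^2 + (1/4)*(mij - aj - ai + c)^2 := by ring

lemma half_sub_sum {n : ℕ} (u v : Fin n → ℝ) :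
    (1/2)*∑ i, u i - (1/2)*∑ i, v i = ∑ i, ((1/2)*u i - (1/2)*v i) := by
  rw [Finset.sum_sub_distrib, ← Finset.mul_sum, ← Finset.mul_sum]

lemma gam2_eq {n : ℕ} (f : (Fin n → Bool) → ℝ) (x : Fin n → Bool) :
    gam2 (cubeGraph n) f x
      = (1/4) * ∑ i, ∑ j, (f (flp j (flp i x)) - f (flp i x) - f (flp j x) + f x)^2 := by
  have step1 : gam2 (cubeGraph n) f x
      = ∑ i, ∑ j, ((1/4)*((f (flp i x) - f (flp j (flp i x))) * (f (flp i x) - f (flp j (flp i x))))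
          - (1/4)*((f x - f (flp j x)) * (f x - f (flp j x)))
          - (1/2)*((f x - f (flp i x)) * (f (flp j x) - f x))
          + (1/2)*((f x - f (flp i x)) * (f (flp j (flp i x)) - f (flp i x)))) := by
    rw [gam2, lap_eq' (gam (cubeGraph n) f f) x, gam_eq' f (lap (cubeGraph n) f) x, half_sub_sum]
    refine Finset.sum_congr rfl fun i _ => ?_
    simp only [gam_eq', lap_eq']
    exact expand_aux (f x - f (flp i x))
      (fun j => (f (flp i x) - f (flp j (flp i x))) * (f (flp i x) - f (flp j (flp i x))))
      (fun j => (f x - f (flp j x)) * (f x - f (flp j x)))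
      (fun j => f (flp j x) - f x)
      (fun j => f (flp j (flp i x)) - f (flp i x))
  rw [step1, Finset.mul_sum]
  simp only [Finset.mul_sum]
  apply sym_trick
  intro i j
  have hm : f (flp i (flp j x)) = f (flp j (flp i x)) := by rw [flp_comm]
  rw [hm]
  exact key_pt (f (flp i x)) (f (flp j x)) (f (flp j (flp i x))) (f x)

lemma ricge_two (n : ℕ) : RicGE (cubeGraph n) 2 := by
  intro f x
  rw [gam2_eq, gam_eq']
  have h2 : ∀ i : Fin n, (f x - f (flp i x)) * (f x - f (flp i x))
      = (1/4)*(f (flp i (flp i x)) - f (flp i x) - f (flp i x) + f x)^2 := by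
    intro i; rw [flp_flp]; ring
  calc 2 * ((1/2) * ∑ i, (f x - f (flp i x)) * (f x - f (flp i x)))
      = ∑ i, (1/4)*(f (flp i (flp i x)) - f (flp i x) - f (flp i x) + f x)^2 := by
        rw [show (2:ℝ) * ((1/2) * ∑ i, (f x - f (flp i x)) * (f x - f (flp i x)))
            = ∑ i, (f x - f (flp i x)) * (f x - f (flp i x)) by ring]
        exact Finset.sum_congr rfl fun i _ => h2 i
    _ ≤ ∑ i, (1/4)*(∑ j, (f (flp j (flp i x)) - f (flp i x) - f (flp j x) + f x)^2) := by
        refine Finset.sum_le_sum fun i _ => ?_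
        have hle : (f (flp i (flp i x)) - f (flp i x) - f (flp i x) + f x)^2
            ≤ ∑ j, (f (flp j (flp i x)) - f (flp i x) - f (flp j x) + f x)^2 :=
          Finset.single_le_sum
            (f := fun j => (f (flp j (flp i x)) - f (flp i x) - f (flp j x) + f x)^2)
            (fun j _ => sq_nonneg _) (Finset.mem_univ i)
        linarith
    _ = (1/4) * ∑ i, ∑ j, (f (flp j (flp i x)) - f (flp i x) - f (flp j x) + f x)^2 := by
        rw [Finset.mul_sum]

def pt (n : ℕ) : Fin n → Bool := fun _ => false

def fcoord (n : ℕ) (i0 : Fin n) : (Fin n → Bool) → ℝ := fun v => if v i0 then 1 else 0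

lemma sharpness (n : ℕ) (hn : 1 ≤ n) (K : ℝ) (hK : RicGE (cubeGraph n) K) : K ≤ 2 := by
  obtain ⟨i0, -⟩ : ∃ _ : Fin n, True := ⟨⟨0, hn⟩, trivial⟩
  have hpt : ∀ k : Fin n, pt n k = false := fun _ => rfl
  have hb1 : ∀ i k : Fin n, flp i (pt n) k = (if k = i then true else false) := by
    intro i k; rw [flp_apply]; by_cases h : k = i <;> simp [h, hpt]
  have hc : fcoord n i0 (pt n) = 0 := by unfold fcoord; simp [hpt]
  have hA : ∀ i, fcoord n i0 (flp i (pt n)) = if i0 = i then 1 else 0 := by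
    intro i; unfold fcoord; rw [hb1]; by_cases h : i0 = i <;> simp [h]
  have hM : ∀ i j, fcoord n i0 (flp j (flp i (pt n))) =
      if i0 = j then (if i0 = i then 0 else 1) else (if i0 = i then 1 else 0) := by
    intro i j
    unfold fcoord
    rw [flp_apply, hb1 i j, hb1 i i0]
    by_cases hj : i0 = j <;> by_cases hi : i0 = i
    · simp [← hj, ← hi]
    · simp [← hj, hi]
    · have hj' : ¬ j = i0 := fun h => hj h.symm
      simp [← hi, hj, hj']
    · simp [hj, hi]
  have hgam : gam (cubeGraph n) (fcoord n i0) (fcoord n i0) (pt n) = 1/2 := by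
    rw [gam_eq']
    have hterm : ∀ i, (fcoord n i0 (pt n) - fcoord n i0 (flp i (pt n))) *
        (fcoord n i0 (pt n) - fcoord n i0 (flp i (pt n))) = if i0 = i then 1 else 0 := by
      intro i; rw [hc, hA]; by_cases h : i0 = i <;> simp [h]
    rw [Finset.sum_congr rfl fun i _ => hterm i]
    rw [Finset.sum_ite_eq]
    simp
  have hgam2 : gam2 (cubeGraph n) (fcoord n i0) (pt n) = 1 := by
    rw [gam2_eq]
    have hterm : ∀ i j, (fcoord n i0 (flp j (flp i (pt n))) - fcoord n i0 (flp i (pt n))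
        - fcoord n i0 (flp j (pt n)) + fcoord n i0 (pt n))^2
        = if i0 = i then (if i0 = j then (4:ℝ) else 0) else 0 := by
      intro i j
      rw [hM, hA, hA, hc]
      split_ifs <;> norm_num
    have : ∑ i, ∑ j, (fcoord n i0 (flp j (flp i (pt n))) - fcoord n i0 (flp i (pt n))
        - fcoord n i0 (flp j (pt n)) + fcoord n i0 (pt n))^2 = 4 := by
      rw [Finset.sum_congr rfl fun i _ => Finset.sum_congr rfl fun j _ => hterm i j]
      have hin : ∀ i : Fin n, (∑ j, if i0 = i then (if i0 = j then (4:ℝ) else 0) else 0)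
          = if i0 = i then (4:ℝ) else 0 := by
        intro i
        by_cases h : i0 = i
        · simp only [if_pos h]
          rw [Finset.sum_ite_eq]
          simp
        · simp [h]
      rw [Finset.sum_congr rfl fun i _ => hin i, Finset.sum_ite_eq]
      simp
    rw [this]
    norm_num
  have h := hK (fcoord n i0) (pt n)
  rw [hgam, hgam2] at h
  linarith

/-- `Ric(Hₙ) = 2` for `n ≥ 1`. -/
theorem ric_hypercube (n : ℕ) (hn : 1 ≤ n) :
    RicGE (cubeGraph n) 2 ∧ ∀ K : ℝ, RicGE (cubeGraph n) K → K ≤ 2 := by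
  exact ⟨ricge_two n, fun K hK => sharpness n hn K hK⟩
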